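/- Let φ: 𝕋 → ℝ be analytic and positive, let j ≥ 0 be an integer, and define ψ = −φ'/(j+2). Consider the map f(s,v) = (s + φ(s)v + O(v²), v + ψ(s)v² + O(v³)) near v = 0. Then the analytic change of variables x = k ∫₀^s φ(t)^{−(j+1)/(j+2)} dt, y = k φ(s)^{1/(j+2)} v, with k⁻¹ = ∫₀¹ φ(t)^{−(j+1)/(j+2)} dt, maps 𝕋 to 𝕋 in the x-variable (x is defined modulo 1), and transforms f into the form x₁ = x + y + O(y²), y₁ = y + O(y³). -/

import Mathlib

open Set intervalIntegral

lemma per_abs_bound {F : ℝ → ℝ} (hc : Continuous F) (hp : Function.Periodic F 1) :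
    ∃ M : ℝ, ∀ s, |F s| ≤ M := by
  obtain ⟨x₀, _, hx₀⟩ := isCompact_Icc.exists_isMaxOn (⟨0, by norm_num⟩ : (Icc (0:ℝ) 1).Nonempty)
    (hc.abs.continuousOn)
  refine ⟨|F x₀|, fun s => ?_⟩
  obtain ⟨y, hy, hFy⟩ := hp.exists_mem_Ico₀ one_pos s
  rw [hFy]
  exact hx₀ (Ico_subset_Icc_self hy)

lemma per_pos_lb {F : ℝ → ℝ} (hc : Continuous F) (hp : Function.Periodic F 1)
    (hpos : ∀ s, 0 < F s) : ∃ c : ℝ, 0 < c ∧ ∀ s, c ≤ F s := by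
  obtain ⟨x₀, _, hx₀⟩ := isCompact_Icc.exists_isMinOn (⟨0, by norm_num⟩ : (Icc (0:ℝ) 1).Nonempty)
    hc.continuousOn
  refine ⟨F x₀, hpos x₀, fun s => ?_⟩
  obtain ⟨y, hy, hFy⟩ := hp.exists_mem_Ico₀ one_pos s
  rw [hFy]
  exact hx₀ (Ico_subset_Icc_self hy)

lemma periodic_deriv_one {F : ℝ → ℝ} (hp : Function.Periodic F 1) :
    Function.Periodic (deriv F) 1 := by
  intro x
  have h1 : deriv F (x + 1) = deriv (fun y => F (y + 1)) x := (deriv_comp_add_const F 1 x).symm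
  rw [h1, hp.funext]

lemma mvt_abs {F : ℝ → ℝ} (hd : Differentiable ℝ F) {M : ℝ}
    (hM : ∀ x, |deriv F x| ≤ M) (x y : ℝ) : |F y - F x| ≤ M * |y - x| := by
  have := Convex.norm_image_sub_le_of_norm_deriv_le (s := Set.univ)
    (fun z _ => (hd z)) (fun z _ => hM z) convex_univ (Set.mem_univ x) (Set.mem_univ y)
  simpa [Real.norm_eq_abs] using this

lemma uIcc_abs_sub {s t u : ℝ} (hu : u ∈ Set.uIcc s t) : |u - s| ≤ |t - s| := by
  rw [Set.uIcc, Set.mem_Icc] at hu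
  have h1 : min s t ≤ s := min_le_left _ _
  have h2 : s ≤ max s t := le_max_left _ _
  have h3 : max s t - min s t = |t - s| := by
    rw [max_sub_min_eq_abs, abs_sub_comm]
  rw [abs_le]
  cases abs_cases (t - s) <;> constructor <;> nlinarith [hu.1, hu.2]

lemma taylor_abs {F : ℝ → ℝ} (hd : Differentiable ℝ F) (hd2 : Differentiable ℝ (deriv F))
    {M : ℝ} (hM : ∀ x, |deriv (deriv F) x| ≤ M) (s t : ℝ) :
    |F t - F s - deriv F s * (t - s)| ≤ M * (t - s) ^ 2 := by
  set G : ℝ → ℝ := fun u => F u - deriv F s * u with hG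
  have hGd : Differentiable ℝ G := hd.sub ((differentiable_const _).mul differentiable_id)
  have hGderiv : ∀ u, deriv G u = deriv F u - deriv F s := by
    intro u
    have h1 : HasDerivAt G (deriv F u - deriv F s) u := by
      exact ((hd u).hasDerivAt.sub ((hasDerivAt_id' u).const_mul (deriv F s))).congr_deriv (by ring)
    exact h1.deriv
  have hbound : ∀ u ∈ Set.uIcc s t, ‖deriv G u‖ ≤ M * |t - s| := by
    intro u hu
    rw [Real.norm_eq_abs, hGderiv]
    calc |deriv F u - deriv F s| ≤ M * |u - s| := mvt_abs hd2 hM s u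
      _ ≤ M * |t - s| := by
          have hM0 : 0 ≤ M := (abs_nonneg _).trans (hM 0)
          exact mul_le_mul_of_nonneg_left (uIcc_abs_sub hu) hM0
  have := Convex.norm_image_sub_le_of_norm_deriv_le (s := Set.uIcc s t)
    (fun z _ => (hGd z)) hbound (convex_uIcc s t) Set.left_mem_uIcc Set.right_mem_uIcc
  have heq : G t - G s = F t - F s - deriv F s * (t - s) := by rw [hG]; ring
  rw [heq, Real.norm_eq_abs, Real.norm_eq_abs] at this
  calc |F t - F s - deriv F s * (t - s)| ≤ M * |t - s| * |t - s| := this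
    _ = M * (t - s) ^ 2 := by rw [mul_assoc, ← abs_mul, ← sq, abs_sq]

/-- The new angular coordinate `x = k ∫₀^s φ(t)^{−(j+1)/(j+2)} dt`,
with `k⁻¹ = ∫₀¹ φ(t)^{−(j+1)/(j+2)} dt`. -/
noncomputable def xCoord (φ : ℝ → ℝ) (j : ℕ) (s : ℝ) : ℝ :=
  (∫ t in (0:ℝ)..1, φ t ^ (-(((j:ℝ) + 1) / ((j:ℝ) + 2))))⁻¹ *
    ∫ t in (0:ℝ)..s, φ t ^ (-(((j:ℝ) + 1) / ((j:ℝ) + 2)))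

/-- The new radial coordinate `y = k φ(s)^{1/(j+2)} v`. -/
noncomputable def yCoord (φ : ℝ → ℝ) (j : ℕ) (p : ℝ × ℝ) : ℝ :=
  (∫ t in (0:ℝ)..1, φ t ^ (-(((j:ℝ) + 1) / ((j:ℝ) + 2))))⁻¹ *
    (φ p.1 ^ ((1:ℝ) / ((j:ℝ) + 2)) * p.2)

set_option maxHeartbeats 1000000 in
/-- Let `φ : 𝕋 → ℝ` be analytic and positive, `j ≥ 0`, `ψ = −φ'/(j+2)`, and let
`f(s,v) = (s + φ(s)v + O(v²), v + ψ(s)v² + O(v³))` near `v = 0`. Then the change of variables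
`x = k ∫₀^s φ^{−(j+1)/(j+2)}`, `y = k φ(s)^{1/(j+2)} v` (with `k` normalizing so that `x` is
defined modulo `1`) satisfies `x(s+1) = x(s) + 1`, and transforms `f` into
`x₁ = x + y + O(y²)`, `y₁ = y + O(y³)`. -/
theorem stmt10 (φ : ℝ → ℝ) (hφa : ∀ x, AnalyticAt ℝ φ x) (hφpos : ∀ x, 0 < φ x)
    (hφper : ∀ x, φ (x + 1) = φ x) (j : ℕ)
    (f : ℝ × ℝ → ℝ × ℝ) (C₀ δ₀ : ℝ) (hδ₀ : 0 < δ₀)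
    (hf1 : ∀ s v : ℝ, |v| ≤ δ₀ →
      |(f (s, v)).1 - (s + φ s * v)| ≤ C₀ * v ^ 2)
    (hf2 : ∀ s v : ℝ, |v| ≤ δ₀ →
      |(f (s, v)).2 - (v + (-(deriv φ s) / ((j:ℝ) + 2)) * v ^ 2)| ≤ C₀ * |v| ^ 3) :
    (∀ s : ℝ, xCoord φ j (s + 1) = xCoord φ j s + 1) ∧
    ∃ C δ : ℝ, 0 < δ ∧ ∀ s v : ℝ, |v| ≤ δ →
      |xCoord φ j (f (s, v)).1 - (xCoord φ j s + yCoord φ j (s, v))|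
        ≤ C * (yCoord φ j (s, v)) ^ 2 ∧
      |yCoord φ j (f (s, v)) - yCoord φ j (s, v)| ≤ C * |yCoord φ j (s, v)| ^ 3 := by
  have hφc : Continuous φ := continuous_iff_continuousAt.2 fun x => (hφa x).continuousAt
  have hφC : ContDiff ℝ (⊤ : ℕ∞) φ := contDiff_iff_contDiffAt.2 fun x => (hφa x).contDiffAt
  have hj2 : (0:ℝ) < (j:ℝ) + 2 := by positivity
  set a : ℝ := ((j:ℝ) + 1) / ((j:ℝ) + 2) with ha
  set b : ℝ := (1:ℝ) / ((j:ℝ) + 2) with hb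
  have hab : -a + 1 = b := by rw [ha, hb]; field_simp; ring
  set g : ℝ → ℝ := fun t => φ t ^ (-a) with hgdef
  set h : ℝ → ℝ := fun t => φ t ^ b with hhdef
  have hgc : Continuous g := hφc.rpow_const (fun x => Or.inl (hφpos x).ne')
  have hhc : Continuous h := hφc.rpow_const (fun x => Or.inl (hφpos x).ne')
  have hgC : ContDiff ℝ (⊤ : ℕ∞) g :=
    contDiff_iff_contDiffAt.2 fun x => (hφC.contDiffAt).rpow_const_of_ne (hφpos x).ne'
  have hhC : ContDiff ℝ (⊤ : ℕ∞) h :=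
    contDiff_iff_contDiffAt.2 fun x => (hφC.contDiffAt).rpow_const_of_ne (hφpos x).ne'
  have hgd : Differentiable ℝ g := hgC.differentiable (by simp)
  have hhd : Differentiable ℝ h := hhC.differentiable (by simp)
  have hgd' : Differentiable ℝ (deriv g) :=
    ((contDiff_infty_iff_deriv.mp hgC).2).differentiable (by simp)
  have hhd' : Differentiable ℝ (deriv h) :=
    ((contDiff_infty_iff_deriv.mp hhC).2).differentiable (by simp)
  have hgc' : Continuous (deriv g) := (contDiff_infty_iff_deriv.mp hgC).2.continuous
  have hhc' : Continuous (deriv h) := (contDiff_infty_iff_deriv.mp hhC).2.continuous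
  have hhc'' : Continuous (deriv (deriv h)) :=
    (contDiff_infty_iff_deriv.mp (contDiff_infty_iff_deriv.mp hhC).2).2.continuous
  have pφ : Function.Periodic φ 1 := hφper
  have pg : Function.Periodic g 1 := fun x => by simp only [hgdef]; rw [hφper]
  have ph : Function.Periodic h 1 := fun x => by simp only [hhdef]; rw [hφper]
  have hgpos : ∀ x, 0 < g x := fun x => Real.rpow_pos_of_pos (hφpos x) _
  have hhpos : ∀ x, 0 < h x := fun x => Real.rpow_pos_of_pos (hφpos x) _
  -- derivative of h
  have hDh : ∀ x, HasDerivAt h (deriv φ x * b * φ x ^ (b - 1)) x := fun x =>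
    ((hφC.differentiable (by simp)) x).hasDerivAt.rpow_const (Or.inl (hφpos x).ne')
  have hderivh : ∀ x, deriv h x = deriv φ x * b * φ x ^ (b - 1) := fun x => (hDh x).deriv
  -- bounds
  obtain ⟨Mφ, hMφ⟩ := per_abs_bound hφc pφ
  obtain ⟨Mφ', hMφ'⟩ := per_abs_bound ((contDiff_infty_iff_deriv.mp hφC).2.continuous)
    (periodic_deriv_one pφ)
  obtain ⟨Mg, hMg⟩ := per_abs_bound hgc pg
  obtain ⟨Mg', hMg'⟩ := per_abs_bound hgc' (periodic_deriv_one pg)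
  obtain ⟨Mh, hMh⟩ := per_abs_bound hhc ph
  obtain ⟨Mh', hMh'⟩ := per_abs_bound hhc' (periodic_deriv_one ph)
  obtain ⟨Mh'', hMh''⟩ := per_abs_bound hhc'' (periodic_deriv_one (periodic_deriv_one ph))
  obtain ⟨ch, hch0, hch⟩ := per_pos_lb hhc ph hhpos
  have hMφ0 : 0 ≤ Mφ := (abs_nonneg _).trans (hMφ 0)
  have hMφ'0 : 0 ≤ Mφ' := (abs_nonneg _).trans (hMφ' 0)
  have hMg0 : 0 ≤ Mg := (abs_nonneg _).trans (hMg 0)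
  have hMg'0 : 0 ≤ Mg' := (abs_nonneg _).trans (hMg' 0)
  have hMh0 : 0 ≤ Mh := (abs_nonneg _).trans (hMh 0)
  have hMh'0 : 0 ≤ Mh' := (abs_nonneg _).trans (hMh' 0)
  have hMh''0 : 0 ≤ Mh'' := (abs_nonneg _).trans (hMh'' 0)
  -- integrability and positivity of the normalizing integral
  have hgint : ∀ u v : ℝ, IntervalIntegrable g MeasureTheory.volume u v :=
    fun u v => hgc.intervalIntegrable u v
  have Ipos : 0 < ∫ t in (0:ℝ)..1, g t :=
    intervalIntegral.intervalIntegral_pos_of_pos (hgint 0 1) hgpos one_pos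
  set K : ℝ := (∫ t in (0:ℝ)..1, g t)⁻¹ with hKdef
  have hK0 : 0 < K := inv_pos.2 Ipos
  have hxval : ∀ s, xCoord φ j s = K * ∫ t in (0:ℝ)..s, g t := fun s => rfl
  have hyval : ∀ p : ℝ × ℝ, yCoord φ j p = K * (h p.1 * p.2) := fun p => rfl
  -- C₀ is nonnegative
  have hC₀ : 0 ≤ C₀ := by
    have h1 := (abs_nonneg ((f (0, δ₀)).1 - (0 + φ 0 * δ₀))).trans
      (hf1 0 δ₀ (by rw [abs_of_pos hδ₀]))
    exact (mul_nonneg_iff_of_pos_right (pow_pos hδ₀ 2)).mp h1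
  set P : ℝ := Mφ + C₀ with hPdef
  have hP0 : 0 ≤ P := by positivity
  set A₁ : ℝ := K * (Mg' * P ^ 2 + Mg * C₀) with hA₁def
  set A₂ : ℝ := K * (Mφ' * (Mh' * P) + Mh' * C₀ + Mh'' * P ^ 2 + Mh * C₀) with hA₂def
  have hA₁0 : 0 ≤ A₁ := by positivity
  have hA₂0 : 0 ≤ A₂ := by positivity
  set C₁ : ℝ := A₁ / (K ^ 2 * ch ^ 2) with hC₁def
  set C₂ : ℝ := A₂ / (K ^ 3 * ch ^ 3) with hC₂def
  have hC₁0 : 0 ≤ C₁ := by positivity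
  have hC₂0 : 0 ≤ C₂ := by positivity
  constructor
  · -- periodicity of xCoord
    intro s
    rw [hxval, hxval]
    have hadd : ∫ t in (0:ℝ)..(s+1), g t
        = (∫ t in (0:ℝ)..s, g t) + ∫ t in s..(s+1), g t :=
      (intervalIntegral.integral_add_adjacent_intervals (hgint 0 s) (hgint s (s+1))).symm
    have hper : ∫ t in s..(s+1), g t = ∫ t in (0:ℝ)..1, g t := by
      have := pg.intervalIntegral_add_eq s 0
      simpa using this
    rw [hadd, hper, mul_add, inv_mul_cancel₀ (ne_of_gt Ipos)]
  · refine ⟨max C₁ C₂, min δ₀ 1, lt_min hδ₀ one_pos, fun s v hv => ?_⟩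
    have hv₀ : |v| ≤ δ₀ := hv.trans (min_le_left _ _)
    have hv1 : |v| ≤ 1 := hv.trans (min_le_right _ _)
    set t₁ : ℝ := (f (s, v)).1 with ht₁def
    set w : ℝ := (f (s, v)).2 with hwdef
    set ψs : ℝ := -(deriv φ s) / ((j:ℝ) + 2) with hψdef
    set e₁ : ℝ := t₁ - (s + φ s * v) with he₁def
    set e₂ : ℝ := w - (v + ψs * v ^ 2) with he₂def
    have he₁ : |e₁| ≤ C₀ * v ^ 2 := hf1 s v hv₀
    have he₂ : |e₂| ≤ C₀ * |v| ^ 3 := hf2 s v hv₀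
    have hv2 : v ^ 2 ≤ |v| := by
      have hvv : v ^ 2 = |v| * |v| := by rw [pow_two v, ← abs_mul_abs_self v]
      rw [hvv]
      exact mul_le_of_le_one_right (abs_nonneg v) hv1
    have hψb : |ψs| ≤ Mφ' := by
      rw [hψdef, abs_div, abs_neg]
      have h1 : (1:ℝ) ≤ |(j:ℝ) + 2| := by rw [abs_of_pos hj2]; linarith [Nat.cast_nonneg (α := ℝ) j]
      exact (div_le_self (abs_nonneg _) h1).trans (hMφ' s)
    have hts : |t₁ - s| ≤ P * |v| := by
      have h0 : t₁ - s = φ s * v + e₁ := by rw [he₁def]; ring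
      rw [h0]
      refine (abs_add_le _ _).trans ?_
      rw [abs_mul]
      have h1 : |φ s| * |v| ≤ Mφ * |v| := mul_le_mul_of_nonneg_right (hMφ s) (abs_nonneg v)
      have h2 : |e₁| ≤ C₀ * |v| := he₁.trans (mul_le_mul_of_nonneg_left hv2 hC₀)
      rw [hPdef, add_mul]; exact add_le_add h1 h2
    -- key algebraic facts
    have hgφ : g s * φ s = h s := by
      simp only [hgdef, hhdef]
      calc φ s ^ (-a) * φ s = φ s ^ (-a) * φ s ^ (1:ℝ) := by rw [Real.rpow_one]
        _ = φ s ^ (-a + 1) := (Real.rpow_add (hφpos s) _ _).symm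
        _ = φ s ^ b := by rw [hab]
    have hid : deriv h s * φ s + h s * ψs = 0 := by
      have h1 : φ s ^ (b - 1) * φ s = φ s ^ b := by
        calc φ s ^ (b-1) * φ s = φ s ^ (b-1) * φ s ^ (1:ℝ) := by rw [Real.rpow_one]
          _ = φ s ^ (b - 1 + 1) := (Real.rpow_add (hφpos s) _ _).symm
          _ = φ s ^ b := by ring_nf
      have h2 : deriv h s * φ s = deriv φ s * b * φ s ^ b := by
        rw [hderivh s, mul_assoc, h1]
      rw [h2, hψdef, hhdef, hb]
      field_simp
      ring
    -- FIRST estimate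
    have hsplit : ∫ u in (0:ℝ)..t₁, g u = (∫ u in (0:ℝ)..s, g u) + ∫ u in s..t₁, g u :=
      (intervalIntegral.integral_add_adjacent_intervals (hgint 0 s) (hgint s t₁)).symm
    have hx1 : xCoord φ j t₁ - (xCoord φ j s + yCoord φ j (s, v))
        = K * ((∫ u in s..t₁, g u) - h s * v) := by
      rw [hxval, hxval, hyval, hsplit]; ring
    have hintsub : ∫ u in s..t₁, (g u - g s)
        = (∫ u in s..t₁, g u) - (t₁ - s) * g s := by
      rw [intervalIntegral.integral_sub (hgint s t₁) intervalIntegrable_const,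
        intervalIntegral.integral_const, smul_eq_mul]
    have hint1 : (∫ u in s..t₁, g u) - h s * v
        = (∫ u in s..t₁, (g u - g s)) + g s * e₁ := by
      rw [hintsub, he₁def]; linear_combination v * hgφ
    have hIbound : |∫ u in s..t₁, (g u - g s)| ≤ Mg' * P ^ 2 * v ^ 2 := by
      have hb1 : ∀ u ∈ Set.uIoc s t₁, ‖g u - g s‖ ≤ Mg' * (P * |v|) := by
        intro u hu
        rw [Real.norm_eq_abs]
        calc |g u - g s| ≤ Mg' * |u - s| := mvt_abs hgd hMg' s u
          _ ≤ Mg' * |t₁ - s| :=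
              mul_le_mul_of_nonneg_left (uIcc_abs_sub (Set.Ioc_subset_Icc_self hu)) hMg'0
          _ ≤ Mg' * (P * |v|) := mul_le_mul_of_nonneg_left hts hMg'0
      have h2 := intervalIntegral.norm_integral_le_of_norm_le_const hb1
      rw [Real.norm_eq_abs] at h2
      calc |∫ u in s..t₁, (g u - g s)| ≤ Mg' * (P * |v|) * |t₁ - s| := h2
        _ ≤ Mg' * (P * |v|) * (P * |v|) :=
            mul_le_mul_of_nonneg_left hts (by positivity)
        _ = Mg' * P ^ 2 * |v| ^ 2 := by ring
        _ = Mg' * P ^ 2 * v ^ 2 := by rw [sq_abs]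
    have hfirst : |xCoord φ j t₁ - (xCoord φ j s + yCoord φ j (s, v))| ≤ A₁ * v ^ 2 := by
      rw [hx1, hint1, abs_mul, abs_of_pos hK0]
      have h4 : |g s * e₁| ≤ Mg * (C₀ * v ^ 2) := by
        rw [abs_mul]
        exact mul_le_mul (hMg s) he₁ (abs_nonneg _) hMg0
      have h3 : |(∫ u in s..t₁, (g u - g s)) + g s * e₁|
          ≤ Mg' * P ^ 2 * v ^ 2 + Mg * (C₀ * v ^ 2) :=
        (abs_add_le _ _).trans (add_le_add hIbound h4)
      calc K * |(∫ u in s..t₁, (g u - g s)) + g s * e₁|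
          ≤ K * (Mg' * P ^ 2 * v ^ 2 + Mg * (C₀ * v ^ 2)) :=
            mul_le_mul_of_nonneg_left h3 hK0.le
        _ = A₁ * v ^ 2 := by rw [hA₁def]; ring
    have hy2 : K ^ 2 * ch ^ 2 * v ^ 2 ≤ (yCoord φ j (s, v)) ^ 2 := by
      rw [hyval]
      have h1 : (K * (h s * v)) ^ 2 = K ^ 2 * (h s) ^ 2 * v ^ 2 := by ring
      rw [h1]
      have h2 : ch ^ 2 ≤ (h s) ^ 2 := pow_le_pow_left₀ hch0.le (hch s) 2
      exact mul_le_mul_of_nonneg_right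
        (mul_le_mul_of_nonneg_left h2 (sq_nonneg K)) (sq_nonneg v)
    have goal1 : |xCoord φ j t₁ - (xCoord φ j s + yCoord φ j (s, v))|
        ≤ max C₁ C₂ * (yCoord φ j (s, v)) ^ 2 := by
      have h1 : A₁ * v ^ 2 = C₁ * (K ^ 2 * ch ^ 2 * v ^ 2) := by
        rw [hC₁def]
        field_simp
      calc |xCoord φ j t₁ - (xCoord φ j s + yCoord φ j (s, v))| ≤ A₁ * v ^ 2 := hfirst
        _ = C₁ * (K ^ 2 * ch ^ 2 * v ^ 2) := h1
        _ ≤ C₁ * (yCoord φ j (s, v)) ^ 2 := mul_le_mul_of_nonneg_left hy2 hC₁0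
        _ ≤ max C₁ C₂ * (yCoord φ j (s, v)) ^ 2 :=
            mul_le_mul_of_nonneg_right (le_max_left _ _) (sq_nonneg _)
    -- SECOND estimate
    set R : ℝ := h t₁ - h s - deriv h s * (t₁ - s) with hRdef
    have hts' : t₁ - s = φ s * v + e₁ := by rw [he₁def]; ring
    have hkey : h t₁ * w - h s * v =
        ψs * (h t₁ - h s) * v ^ 2 + deriv h s * e₁ * v + R * v + h t₁ * e₂ := by
      have hw' : w = v + ψs * v ^ 2 + e₂ := by rw [he₂def]; ring
      rw [hw', hRdef]
      linear_combination v ^ 2 * hid + deriv h s * v * hts'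
    have hΔ : |h t₁ - h s| ≤ Mh' * (P * |v|) :=
      (mvt_abs hhd hMh' s t₁).trans (mul_le_mul_of_nonneg_left hts hMh'0)
    have hT1 : |ψs * (h t₁ - h s) * v ^ 2| ≤ Mφ' * (Mh' * P) * |v| ^ 3 := by
      rw [abs_mul, abs_mul, abs_pow, sq_abs]
      calc |ψs| * |h t₁ - h s| * v ^ 2
          ≤ Mφ' * (Mh' * (P * |v|)) * v ^ 2 := by
            refine mul_le_mul_of_nonneg_right ?_ (sq_nonneg v)
            exact mul_le_mul hψb hΔ (abs_nonneg _) hMφ'0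
        _ = Mφ' * (Mh' * P) * (|v| * v ^ 2) := by ring
        _ = Mφ' * (Mh' * P) * |v| ^ 3 := by rw [← sq_abs v]; ring
    have hT2 : |deriv h s * e₁ * v| ≤ Mh' * C₀ * |v| ^ 3 := by
      rw [abs_mul, abs_mul]
      calc |deriv h s| * |e₁| * |v|
          ≤ Mh' * (C₀ * v ^ 2) * |v| := by
            refine mul_le_mul_of_nonneg_right ?_ (abs_nonneg v)
            exact mul_le_mul (hMh' s) he₁ (abs_nonneg _) hMh'0
        _ = Mh' * C₀ * (v ^ 2 * |v|) := by ring
        _ = Mh' * C₀ * |v| ^ 3 := by rw [← sq_abs v]; ring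
    have hts2 : (t₁ - s) ^ 2 ≤ P ^ 2 * v ^ 2 := by
      have h1 : |t₁ - s| ^ 2 ≤ (P * |v|) ^ 2 := pow_le_pow_left₀ (abs_nonneg _) hts 2
      rw [sq_abs] at h1
      calc (t₁ - s) ^ 2 ≤ (P * |v|) ^ 2 := h1
        _ = P ^ 2 * |v| ^ 2 := by ring
        _ = P ^ 2 * v ^ 2 := by rw [sq_abs]
    have hT3 : |R * v| ≤ Mh'' * P ^ 2 * |v| ^ 3 := by
      rw [abs_mul]
      have hR : |R| ≤ Mh'' * (t₁ - s) ^ 2 := taylor_abs hhd hhd' hMh'' s t₁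
      calc |R| * |v| ≤ Mh'' * (P ^ 2 * v ^ 2) * |v| := by
            refine mul_le_mul_of_nonneg_right ?_ (abs_nonneg v)
            refine hR.trans ?_
            rw [← mul_assoc]
            exact mul_le_mul_of_nonneg_left hts2 hMh''0 |>.trans_eq (by ring)
        _ = Mh'' * P ^ 2 * (v ^ 2 * |v|) := by ring
        _ = Mh'' * P ^ 2 * |v| ^ 3 := by rw [← sq_abs v]; ring
    have hT4 : |h t₁ * e₂| ≤ Mh * C₀ * |v| ^ 3 := by
      rw [abs_mul]
      calc |h t₁| * |e₂| ≤ Mh * (C₀ * |v| ^ 3) :=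
          mul_le_mul (hMh t₁) he₂ (abs_nonneg _) hMh0
        _ = Mh * C₀ * |v| ^ 3 := by ring
    have hsum : |h t₁ * w - h s * v|
        ≤ (Mφ' * (Mh' * P) + Mh' * C₀ + Mh'' * P ^ 2 + Mh * C₀) * |v| ^ 3 := by
      rw [hkey]
      have h4 : |ψs * (h t₁ - h s) * v ^ 2 + deriv h s * e₁ * v + R * v + h t₁ * e₂|
          ≤ |ψs * (h t₁ - h s) * v ^ 2| + |deriv h s * e₁ * v| + |R * v| + |h t₁ * e₂| := by
        refine (abs_add_le _ _).trans ?_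
        refine add_le_add ((abs_add_le _ _).trans ?_) le_rfl
        exact add_le_add (abs_add_le _ _) le_rfl
      have h5 : (Mφ' * (Mh' * P) + Mh' * C₀ + Mh'' * P ^ 2 + Mh * C₀) * |v| ^ 3
          = Mφ' * (Mh' * P) * |v| ^ 3 + Mh' * C₀ * |v| ^ 3 + Mh'' * P ^ 2 * |v| ^ 3
            + Mh * C₀ * |v| ^ 3 := by ring
      rw [h5]
      exact h4.trans (add_le_add (add_le_add (add_le_add hT1 hT2) hT3) hT4)
    have hsecond : |yCoord φ j (f (s, v)) - yCoord φ j (s, v)| ≤ A₂ * |v| ^ 3 := by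
      have h1 : yCoord φ j (f (s, v)) - yCoord φ j (s, v) = K * (h t₁ * w - h s * v) := by
        rw [hyval (f (s, v)), hyval (s, v)]; rw [← ht₁def, ← hwdef]; ring
      rw [h1, abs_mul, abs_of_pos hK0]
      calc K * |h t₁ * w - h s * v|
          ≤ K * ((Mφ' * (Mh' * P) + Mh' * C₀ + Mh'' * P ^ 2 + Mh * C₀) * |v| ^ 3) :=
            mul_le_mul_of_nonneg_left hsum hK0.le
        _ = A₂ * |v| ^ 3 := by rw [hA₂def]; ring
    have hy3 : K ^ 3 * ch ^ 3 * |v| ^ 3 ≤ |yCoord φ j (s, v)| ^ 3 := by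
      rw [hyval]
      have h1 : |K * (h s * v)| = K * h s * |v| := by
        rw [abs_mul, abs_mul, abs_of_pos hK0, abs_of_pos (hhpos s)]; ring
      rw [h1]
      have h2 : ch ^ 3 ≤ (h s) ^ 3 := pow_le_pow_left₀ hch0.le (hch s) 3
      have h3 : (K * h s * |v|) ^ 3 = K ^ 3 * (h s) ^ 3 * |v| ^ 3 := by ring
      rw [h3]
      have h4 : (0:ℝ) ≤ |v| ^ 3 := by positivity
      exact mul_le_mul_of_nonneg_right
        (mul_le_mul_of_nonneg_left h2 (pow_pos hK0 3).le) h4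
    have goal2 : |yCoord φ j (f (s, v)) - yCoord φ j (s, v)|
        ≤ max C₁ C₂ * |yCoord φ j (s, v)| ^ 3 := by
      have h1 : A₂ * |v| ^ 3 = C₂ * (K ^ 3 * ch ^ 3 * |v| ^ 3) := by
        rw [hC₂def]
        field_simp
      calc |yCoord φ j (f (s, v)) - yCoord φ j (s, v)| ≤ A₂ * |v| ^ 3 := hsecond
        _ = C₂ * (K ^ 3 * ch ^ 3 * |v| ^ 3) := h1
        _ ≤ C₂ * |yCoord φ j (s, v)| ^ 3 := mul_le_mul_of_nonneg_left hy3 hC₂0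
        _ ≤ max C₁ C₂ * |yCoord φ j (s, v)| ^ 3 :=
            mul_le_mul_of_nonneg_right (le_max_right _ _) (by positivity)
    exact ⟨goal1, goal2⟩
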